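/- Let M be a module. If the poset of direct summands of M has deviation α, then its dual poset also has deviation, and the two deviations are equal. -/

import Mathlib

universe v

/-- `DevLE S o` says the subposet `S` of `P` has deviation at most `o` (where deviation
`-1`, i.e. `S` discrete, is allowed): for every descending chain in `S`, all but finitely
many of the consecutive intervals are discrete or have deviation `< o`. -/
def DevLE {P : Type*} [Preorder P] (S : Set P) (o : Ordinal.{v}) : Prop :=
  ∀ f : ℕ → P, (∀ n, f n ∈ S) → (∀ n, f (n + 1) ≤ f n) →
    ∃ N : ℕ, ∀ n ≥ N,
      (∀ a ∈ S ∩ Set.Icc (f (n + 1)) (f n), ∀ b ∈ S ∩ Set.Icc (f (n + 1)) (f n),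
        a ≤ b → a = b) ∨
      ∃ o' : Ordinal.{v}, ∃ _ : o' < o, DevLE (S ∩ Set.Icc (f (n + 1)) (f n)) o'
termination_by o

/-- `N` is a direct summand of the module `M`. -/
def IsSummand {R : Type*} [Ring R] {M : Type*} [AddCommGroup M] [Module R M]
    (N : Submodule R M) : Prop :=
  ∃ N', IsCompl N N'

theorem devLE_congr : ∀ (o : Ordinal.{v}) {P Q : Type*} [Preorder P] [Preorder Q]
    (S : Set P) (T : Set Q) (g : P → Q) (h : Q → P),
    (∀ a ∈ S, g a ∈ T) → (∀ b ∈ T, h b ∈ S) →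
    (∀ a ∈ S, h (g a) = a) → (∀ b ∈ T, g (h b) = b) →
    (∀ a ∈ S, ∀ b ∈ S, a ≤ b → g a ≤ g b) →
    (∀ a ∈ T, ∀ b ∈ T, a ≤ b → h a ≤ h b) →
    DevLE T o → DevLE S o := by
  intro o
  induction o using Ordinal.induction with
  | h o IH =>
    intro P Q _ _ S T g h hgT hhS hhg hghb hgm hhm H
    rw [DevLE] at H ⊢
    intro f hfS hf
    obtain ⟨N, hN⟩ := H (fun n => g (f n)) (fun n => hgT _ (hfS n))
      (fun n => hgm _ (hfS (n + 1)) _ (hfS n) (hf n))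
    refine ⟨N, fun n hn => ?_⟩
    rcases hN n hn with disc | ⟨o', ho', hdev⟩
    · left
      rintro a ⟨haS, ha1, ha2⟩ b ⟨hbS, hb1, hb2⟩ hab
      have hga : g a ∈ T ∩ Set.Icc (g (f (n + 1))) (g (f n)) :=
        ⟨hgT _ haS, hgm _ (hfS (n + 1)) _ haS ha1, hgm _ haS _ (hfS n) ha2⟩
      have hgb : g b ∈ T ∩ Set.Icc (g (f (n + 1))) (g (f n)) :=
        ⟨hgT _ hbS, hgm _ (hfS (n + 1)) _ hbS hb1, hgm _ hbS _ (hfS n) hb2⟩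
      have := disc _ hga _ hgb (hgm _ haS _ hbS hab)
      calc a = h (g a) := (hhg _ haS).symm
        _ = h (g b) := by rw [this]
        _ = b := hhg _ hbS
    · right
      refine ⟨o', ho', IH o' ho' _ _ g h ?_ ?_ ?_ ?_ ?_ ?_ hdev⟩
      · rintro a ⟨haS, ha1, ha2⟩
        exact ⟨hgT _ haS, hgm _ (hfS (n + 1)) _ haS ha1, hgm _ haS _ (hfS n) ha2⟩
      · rintro b ⟨hbT, hb1, hb2⟩
        refine ⟨hhS _ hbT, ?_, ?_⟩
        · have := hhm _ (hgT _ (hfS (n + 1))) _ hbT hb1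
          rwa [hhg _ (hfS (n + 1))] at this
        · have := hhm _ hbT _ (hgT _ (hfS n)) hb2
          rwa [hhg _ (hfS n)] at this
      · rintro a ⟨haS, -, -⟩; exact hhg _ haS
      · rintro b ⟨hbT, -, -⟩; exact hghb _ hbT
      · rintro a ⟨haS, -, -⟩ b ⟨hbS, -, -⟩ hab; exact hgm _ haS _ hbS hab
      · rintro a ⟨haT, -, -⟩ b ⟨hbT, -, -⟩ hab; exact hhm _ haT _ hbT hab

section Lattice
variable {α : Type*} [Lattice α] [IsModularLattice α] [BoundedOrder α]

theorem lemC {a b d d' : α} (h1 : a ⊓ b = ⊥) (h2 : a ⊔ b = d) (hd : IsCompl d d') :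
    IsCompl a (b ⊔ d') := by
  have hbd : b ≤ d := h2 ▸ le_sup_right
  have had : a ≤ d := h2 ▸ le_sup_left
  have key : (b ⊔ d') ⊓ d = b := by
    rw [sup_inf_assoc_of_le _ hbd, disjoint_iff.mp hd.symm.disjoint, sup_bot_eq]
  constructor
  · rw [disjoint_iff]
    calc a ⊓ (b ⊔ d') = a ⊓ d ⊓ (b ⊔ d') := by rw [inf_eq_left.2 had]
      _ = a ⊓ ((b ⊔ d') ⊓ d) := by rw [inf_assoc, inf_comm d]
      _ = ⊥ := by rw [key, h1]
  · rw [codisjoint_iff, ← sup_assoc, h2, codisjoint_iff.mp hd.codisjoint]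

theorem lemA {a a' x x' : α} (h : IsCompl a a') (hx : IsCompl x x') (hax : a ≤ x) :
    IsCompl (a' ⊓ x) (a ⊔ x') := by
  refine lemC ?_ ?_ hx
  · exact le_antisymm
      (le_trans (inf_le_inf_right a inf_le_left) (le_of_eq (disjoint_iff.mp h.symm.disjoint)))
      bot_le
  · rw [sup_comm, ← sup_inf_assoc_of_le _ hax, codisjoint_iff.mp h.codisjoint, top_inf_eq]

theorem lemB {c c' y y' : α} (h : IsCompl c c') (hy : IsCompl y y') (hyc : y ≤ c') :
    IsCompl (c ⊔ y) (y' ⊓ c') := by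
  have := (lemA hy h.symm hyc).symm
  rwa [sup_comm] at this

theorem inf_sup_compl_eq {x c d d' : α} (hc : c ≤ d) (hx : x ≤ d) (hd : IsCompl d d') :
    x ⊓ (c ⊔ d') = x ⊓ c := by
  have key : (c ⊔ d') ⊓ d = c := by
    rw [sup_inf_assoc_of_le _ hc, disjoint_iff.mp hd.symm.disjoint, sup_bot_eq]
  calc x ⊓ (c ⊔ d') = x ⊓ d ⊓ (c ⊔ d') := by rw [inf_eq_left.2 hx]
    _ = x ⊓ ((c ⊔ d') ⊓ d) := by rw [inf_assoc, inf_comm d]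
    _ = x ⊓ c := by rw [key]

/-- if `u ≤ X ≤ d` and `u ⊔ c = d` then `u ⊔ (X ⊓ c) = X` (modularity). -/
theorem sup_inf_self_of_le {u c d X : α} (huX : u ≤ X) (hsup : u ⊔ c = d) (hXd : X ≤ d) :
    u ⊔ X ⊓ c = X := by
  have h := sup_inf_assoc_of_le (x := u) c huX
  rw [hsup, inf_eq_right.2 hXd] at h
  rw [inf_comm X c]
  exact h.symm

/-- if `Y ≤ z` and `c ⊓ z = ⊥` then `(c ⊔ Y) ⊓ z = Y` (modularity). -/
theorem sup_inf_eq_of_inf_eq_bot {c Y z : α} (hYz : Y ≤ z) (hcz : c ⊓ z = ⊥) :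
    (c ⊔ Y) ⊓ z = Y := by
  rw [sup_comm, sup_inf_assoc_of_le _ hYz, hcz, sup_bot_eq]

end Lattice

section Summand
variable {R : Type*} [Ring R] {M : Type*} [AddCommGroup M] [Module R M]

theorem bot_summand : IsSummand (⊥ : Submodule R M) := ⟨⊤, isCompl_bot_top⟩
theorem top_summand : IsSummand (⊤ : Submodule R M) := ⟨⊥, isCompl_top_bot⟩

theorem summand_inf {a a' x : Submodule R M} (h : IsCompl a a') (hax : a ≤ x)
    (hx : IsSummand x) : IsSummand (x ⊓ a') := by
  obtain ⟨x', hx'⟩ := hx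
  exact ⟨a ⊔ x', inf_comm a' x ▸ lemA h hx' hax⟩

theorem summand_sup {c c' y : Submodule R M} (h : IsCompl c c') (hyc : y ≤ c')
    (hy : IsSummand y) : IsSummand (c ⊔ y) := by
  obtain ⟨y', hy'⟩ := hy
  exact ⟨y' ⊓ c', lemB h hy' hyc⟩

theorem exists_compl_chain_asc (D : Submodule R M) (hD : IsSummand D)
    (g : ℕ → Submodule R M) (hs : ∀ n, IsSummand (g n)) (hm : ∀ n, g n ≤ g (n + 1))
    (hle : ∀ n, g n ≤ D) :
    ∃ C : ℕ → Submodule R M, ∀ n,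
      IsSummand (C n) ∧ C (n + 1) ≤ C n ∧ g n ⊓ C n = ⊥ ∧ g n ⊔ C n = D := by
  obtain ⟨D', hD'⟩ := hD
  set Inv : ℕ → Submodule R M → Prop :=
    fun n c => IsSummand c ∧ g n ⊓ c = ⊥ ∧ g n ⊔ c = D with hInv
  have base : ∃ c, Inv 0 c := by
    obtain ⟨K, hK⟩ := hs 0
    refine ⟨K ⊓ D, ⟨g 0 ⊔ D', lemA hK hD' (hle 0)⟩, ?_, ?_⟩
    · exact le_antisymm (le_trans (inf_le_inf_left _ inf_le_left)
        (le_of_eq (disjoint_iff.mp hK.disjoint))) bot_le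
    · rw [← sup_inf_assoc_of_le _ (hle 0), codisjoint_iff.mp hK.codisjoint, top_inf_eq]
  have step : ∀ n c, Inv n c → ∃ c', c' ≤ c ∧ Inv (n + 1) c' := by
    rintro n c ⟨hcs, hinf, hsup⟩
    obtain ⟨L, hL⟩ := hs (n + 1)
    set E := c ⊓ g (n + 1) with hEdef
    have h1 : g n ⊔ E = g (n + 1) := by
      have := sup_inf_assoc_of_le (x := g n) c (hm n)
      rw [hsup, inf_eq_right.2 (hle (n + 1))] at this
      exact this.symm
    have h2 : E ⊓ g n = ⊥ := le_antisymm (le_trans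
      (inf_le_inf_right _ inf_le_left) (by rw [inf_comm, hinf])) bot_le
    have hEc : IsCompl E (g n ⊔ L) := lemC h2 (by rw [sup_comm]; exact h1) hL
    have hEcup : E ⊔ (g n ⊔ L) ⊓ c = c := by
      have h3 := sup_inf_assoc_of_le (x := E) (g n ⊔ L) (inf_le_left : E ≤ c)
      rw [← sup_assoc, sup_comm E (g n), h1, codisjoint_iff.mp hL.codisjoint,
        top_inf_eq] at h3
      exact h3.symm
    refine ⟨c ⊓ (g n ⊔ L), inf_le_left, ?_, ?_, ?_⟩
    · exact summand_inf hEc inf_le_left hcs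
    · calc g (n + 1) ⊓ (c ⊓ (g n ⊔ L)) = E ⊓ (g n ⊔ L) := by
            rw [← inf_assoc, inf_comm (g (n + 1)) c]
        _ = ⊥ := disjoint_iff.mp hEc.disjoint
    · calc g (n + 1) ⊔ c ⊓ (g n ⊔ L)
          = (g n ⊔ E) ⊔ (g n ⊔ L) ⊓ c := by rw [h1, inf_comm c]
        _ = g n ⊔ (E ⊔ (g n ⊔ L) ⊓ c) := by rw [sup_assoc]
        _ = g n ⊔ c := by rw [hEcup]
        _ = D := hsup
  choose F0 hF0 using base
  let F : ∀ n : ℕ, {c : Submodule R M // Inv n c} := fun n =>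
    Nat.rec ⟨F0, hF0⟩
      (fun n ih => ⟨(step n ih.1 ih.2).choose, (step n ih.1 ih.2).choose_spec.2⟩) n
  refine ⟨fun n => (F n).1, fun n => ⟨(F n).2.1, ?_, (F n).2.2.1, (F n).2.2.2⟩⟩
  exact (step n (F n).1 (F n).2).choose_spec.1

theorem exists_compl_chain_desc (D : Submodule R M) (hD : IsSummand D)
    (f : ℕ → Submodule R M) (hs : ∀ n, IsSummand (f n)) (hm : ∀ n, f (n + 1) ≤ f n)
    (hle : ∀ n, f n ≤ D) :
    ∃ C : ℕ → Submodule R M, ∀ n,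
      IsSummand (C n) ∧ C n ≤ C (n + 1) ∧ f n ⊓ C n = ⊥ ∧ f n ⊔ C n = D := by
  obtain ⟨D', hD'⟩ := hD
  set Inv : ℕ → Submodule R M → Prop :=
    fun n c => IsSummand c ∧ f n ⊓ c = ⊥ ∧ f n ⊔ c = D with hInv
  have base : ∃ c, Inv 0 c := by
    obtain ⟨K, hK⟩ := hs 0
    refine ⟨K ⊓ D, ⟨f 0 ⊔ D', lemA hK hD' (hle 0)⟩, ?_, ?_⟩
    · exact le_antisymm (le_trans (inf_le_inf_left _ inf_le_left)
        (le_of_eq (disjoint_iff.mp hK.disjoint))) bot_le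
    · rw [← sup_inf_assoc_of_le _ (hle 0), codisjoint_iff.mp hK.codisjoint, top_inf_eq]
  have step : ∀ n c, Inv n c → ∃ c', c ≤ c' ∧ Inv (n + 1) c' := by
    rintro n c ⟨hcs, hinf, hsup⟩
    obtain ⟨L, hL⟩ := hs (n + 1)
    have hcD : c ≤ D := hsup ▸ le_sup_right
    set E := L ⊓ f n with hEdef
    have h1 : f (n + 1) ⊔ E = f n := by
      rw [hEdef, ← sup_inf_assoc_of_le _ (hm n), codisjoint_iff.mp hL.codisjoint, top_inf_eq]
    have h2 : f (n + 1) ⊓ E = ⊥ := le_antisymm (le_trans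
      (inf_le_inf_left _ inf_le_left) (le_of_eq (disjoint_iff.mp hL.disjoint))) bot_le
    have hfc : IsCompl (f n) (c ⊔ D') := lemC hinf hsup hD'
    have hEc : IsCompl E (f (n + 1) ⊔ (c ⊔ D')) := lemA hL hfc (hm n)
    have hcc : IsCompl c (f n ⊔ D') :=
      lemC (by rw [inf_comm]; exact hinf) (by rw [sup_comm]; exact hsup) hD'
    have hEfD : E ≤ f n ⊔ D' := le_trans inf_le_right le_sup_left
    refine ⟨c ⊔ E, le_sup_left, summand_sup hcc hEfD ⟨_, hEc⟩, ?_, ?_⟩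
    · have hcE : (c ⊔ E) ⊓ f n = E := by
        rw [sup_comm c E, sup_inf_assoc_of_le _ (inf_le_right : E ≤ f n),
          inf_comm c, hinf, sup_bot_eq]
      calc f (n + 1) ⊓ (c ⊔ E) = f (n + 1) ⊓ (f n ⊓ (c ⊔ E)) := by
            rw [← inf_assoc, inf_eq_left.2 (hm n)]
        _ = f (n + 1) ⊓ E := by rw [inf_comm (f n), hcE]
        _ = ⊥ := h2
    · calc f (n + 1) ⊔ (c ⊔ E) = (f (n + 1) ⊔ E) ⊔ c := by
            rw [sup_comm c E, ← sup_assoc]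
        _ = f n ⊔ c := by rw [h1]
        _ = D := hsup
  choose F0 hF0 using base
  let F : ∀ n : ℕ, {c : Submodule R M // Inv n c} := fun n =>
    Nat.rec ⟨F0, hF0⟩
      (fun n ih => ⟨(step n ih.1 ih.2).choose, (step n ih.1 ih.2).choose_spec.2⟩) n
  refine ⟨fun n => (F n).1, fun n => ⟨(F n).2.1, ?_, (F n).2.2.1, (F n).2.2.2⟩⟩
  exact (step n (F n).1 (F n).2).choose_spec.1

/-- the set of summands contained in `D`. -/
def SD (D : Submodule R M) : Set (Submodule R M) := {X | IsSummand X ∧ X ≤ D}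

/-- the dual version of `SD D`. -/
def TD (D : Submodule R M) : Set (Submodule R M)ᵒᵈ :=
  {X | IsSummand (OrderDual.ofDual X) ∧ OrderDual.ofDual X ≤ D}

theorem main_iff : ∀ (o : Ordinal.{v}) (D : Submodule R M), IsSummand D →
    (DevLE (SD D) o ↔ DevLE (TD D) o) := by
  intro o
  induction o using Ordinal.induction with
  | h o IH =>
    intro D hD
    obtain ⟨D', hD'⟩ := hD
    constructor
    · -- forwards: from straight to dual
      intro H
      rw [DevLE]
      intro f hf hmono
      set g : ℕ → Submodule R M := fun n => OrderDual.ofDual (f n) with hgdef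
      obtain ⟨C, hC⟩ := exists_compl_chain_asc D ⟨D', hD'⟩ g (fun n => (hf n).1)
        (fun n => hmono n) (fun n => (hf n).2)
      rw [DevLE] at H
      obtain ⟨N, hN⟩ := H C (fun n => ⟨(hC n).1, (hC n).2.2.2 ▸ le_sup_right⟩)
        (fun n => (hC n).2.1)
      refine ⟨N, fun n hn => ?_⟩
      have hCs : IsSummand (C n) := (hC n).1
      have hCs1 : IsSummand (C (n + 1)) := (hC (n + 1)).1
      have hCle : C (n + 1) ≤ C n := (hC n).2.1
      have hinf : g n ⊓ C n = ⊥ := (hC n).2.2.1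
      have hsup : g n ⊔ C n = D := (hC n).2.2.2
      have hinf1 : g (n + 1) ⊓ C (n + 1) = ⊥ := (hC (n + 1)).2.2.1
      have hsup1 : g (n + 1) ⊔ C (n + 1) = D := (hC (n + 1)).2.2.2
      have hgD : g n ≤ D := (hf n).2
      have hgD1 : g (n + 1) ≤ D := (hf (n + 1)).2
      have hCD : C n ≤ D := hsup ▸ le_sup_right
      have hCD1 : C (n + 1) ≤ D := hsup1 ▸ le_sup_right
      have hgmle : g n ≤ g (n + 1) := hmono n
      set E := g (n + 1) ⊓ C n with hEdef
      have hEg : E ≤ g (n + 1) := inf_le_left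
      have hEC : E ≤ C n := inf_le_right
      have f1 : g n ⊔ E = g (n + 1) :=
        sup_inf_self_of_le hgmle hsup hgD1
      have f2 : C (n + 1) ⊔ E = C n := by
        rw [hEdef, inf_comm (g (n + 1)) (C n)]
        exact sup_inf_self_of_le hCle (by rw [sup_comm]; exact hsup1) hCD
      have f3 : C (n + 1) ⊓ g (n + 1) = ⊥ := by rw [inf_comm]; exact hinf1
      have f4 : E ⊓ g n = ⊥ := le_antisymm (le_trans
        (inf_le_inf_right _ hEC) (by rw [inf_comm]; exact le_of_eq hinf)) bot_le
      have hE : IsSummand E := by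
        obtain ⟨L, hL⟩ := (hf (n + 1)).1
        exact ⟨g n ⊔ L, lemC f4 (by rw [sup_comm]; exact f1) hL⟩
      have compl1 : IsCompl (g n) (C n ⊔ D') := lemC hinf hsup hD'
      have compl2 : IsCompl (C (n + 1)) (g (n + 1) ⊔ D') :=
        lemC f3 (by rw [sup_comm]; exact hsup1) hD'
      rcases hN n hn with disc | ⟨o', ho', hdev⟩
      · left
        rintro a ⟨⟨has, haD⟩, ha1, ha2⟩ b ⟨⟨hbs, hbD⟩, hb1, hb2⟩ hab
        have hA1 : OrderDual.ofDual a ≤ g (n + 1) := ha1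
        have hA2 : g n ≤ OrderDual.ofDual a := ha2
        have hB1 : OrderDual.ofDual b ≤ g (n + 1) := hb1
        have hB2 : g n ≤ OrderDual.ofDual b := hb2
        have hBA : OrderDual.ofDual b ≤ OrderDual.ofDual a := hab
        set A := OrderDual.ofDual a with hAdef
        set B := OrderDual.ofDual b with hBdef
        have memPhi : ∀ X : Submodule R M, IsSummand X → X ≤ D → g n ≤ X → X ≤ g (n + 1) →
            C (n + 1) ⊔ X ⊓ C n ∈ SD D ∩ Set.Icc (C (n + 1)) (C n) := by
          intro X hXs hXD hX1 hX2
          have e : X ⊓ (C n ⊔ D') = X ⊓ C n := inf_sup_compl_eq hCD hXD hD'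
          have s1 : IsSummand (X ⊓ C n) := e ▸ summand_inf compl1 hX1 hXs
          refine ⟨⟨summand_sup compl2 ?_ s1, sup_le hCD1 (le_trans inf_le_right hCD)⟩,
            le_sup_left, sup_le hCle inf_le_right⟩
          exact le_trans (le_trans inf_le_left hX2) le_sup_left
        have memA := memPhi A has haD hA2 hA1
        have memB := memPhi B hbs hbD hB2 hB1
        have hle' : C (n + 1) ⊔ B ⊓ C n ≤ C (n + 1) ⊔ A ⊓ C n :=
          sup_le_sup_left (inf_le_inf_right _ hBA) _
        have heq := disc _ memB _ memA hle'
        have rA : (C (n + 1) ⊔ A ⊓ C n) ⊓ g (n + 1) = A ⊓ C n :=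
          sup_inf_eq_of_inf_eq_bot (le_trans inf_le_left hA1) f3
        have rB : (C (n + 1) ⊔ B ⊓ C n) ⊓ g (n + 1) = B ⊓ C n :=
          sup_inf_eq_of_inf_eq_bot (le_trans inf_le_left hB1) f3
        have hABC : A ⊓ C n = B ⊓ C n := by rw [← rA, ← rB, heq]
        have hfin : A = B := by
          rw [← sup_inf_self_of_le hA2 hsup haD, ← sup_inf_self_of_le hB2 hsup hbD, hABC]
        exact OrderDual.ofDual.injective hfin
      · right
        refine ⟨o', ho', ?_⟩
        have step1 : DevLE (SD E) o' := by
          refine devLE_congr o' (SD E) (SD D ∩ Set.Icc (C (n + 1)) (C n))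
            (fun Y => C (n + 1) ⊔ Y) (fun X => X ⊓ g (n + 1)) ?_ ?_ ?_ ?_ ?_ ?_ hdev
          · rintro Y ⟨hY1, hY2⟩
            refine ⟨⟨summand_sup compl2 (le_trans (le_trans hY2 hEg) le_sup_left) hY1,
              sup_le hCD1 (le_trans hY2 (le_trans hEC hCD))⟩,
              le_sup_left, sup_le hCle (le_trans hY2 hEC)⟩
          · rintro X ⟨⟨hXs, hXD⟩, hX1, hX2⟩
            have e : X ⊓ (g (n + 1) ⊔ D') = X ⊓ g (n + 1) := inf_sup_compl_eq hgD1 hXD hD'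
            refine ⟨show IsSummand (X ⊓ g (n + 1)) from e ▸ summand_inf compl2 hX1 hXs, ?_⟩
            rw [hEdef]
            exact le_inf inf_le_right (le_trans inf_le_left hX2)
          · rintro Y ⟨hY1, hY2⟩
            exact sup_inf_eq_of_inf_eq_bot (le_trans hY2 hEg) f3
          · rintro X ⟨⟨hXs, hXD⟩, hX1, hX2⟩
            exact sup_inf_self_of_le hX1 (by rw [sup_comm]; exact hsup1) hXD
          · rintro Y₁ - Y₂ - hY
            exact sup_le_sup_left hY _
          · rintro X₁ - X₂ - hX
            exact inf_le_inf_right _ hX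
        have step2 : DevLE (TD E) o' := (IH o' ho' E hE).mp step1
        refine devLE_congr o' (TD D ∩ Set.Icc (f (n + 1)) (f n)) (TD E)
          (fun X => OrderDual.toDual (OrderDual.ofDual X ⊓ C n))
          (fun Y => OrderDual.toDual (g n ⊔ OrderDual.ofDual Y)) ?_ ?_ ?_ ?_ ?_ ?_ step2
        · rintro X ⟨⟨hXs, hXD⟩, hX1, hX2⟩
          have hX1' : OrderDual.ofDual X ≤ g (n + 1) := hX1
          have hX2' : g n ≤ OrderDual.ofDual X := hX2
          have e : OrderDual.ofDual X ⊓ (C n ⊔ D') = OrderDual.ofDual X ⊓ C n :=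
            inf_sup_compl_eq hCD hXD hD'
          refine ⟨show IsSummand (OrderDual.ofDual X ⊓ C n) from
            e ▸ summand_inf compl1 hX2' hXs, ?_⟩
          rw [hEdef]
          exact inf_le_inf_right _ hX1'
        · rintro Y ⟨hY1, hY2⟩
          refine ⟨⟨summand_sup compl1 (le_trans hY2 (le_trans hEC le_sup_left)) hY1,
            sup_le hgD (le_trans hY2 (le_trans hEC hCD))⟩, ?_, ?_⟩
          · exact (sup_le hgmle (le_trans hY2 hEg) :
              g n ⊔ OrderDual.ofDual Y ≤ g (n + 1))
          · exact (le_sup_left : g n ≤ g n ⊔ OrderDual.ofDual Y)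
        · rintro X ⟨⟨hXs, hXD⟩, hX1, hX2⟩
          have hX2' : g n ≤ OrderDual.ofDual X := hX2
          exact congrArg OrderDual.toDual (sup_inf_self_of_le hX2' hsup hXD)
        · rintro Y ⟨hY1, hY2⟩
          exact congrArg OrderDual.toDual
            (sup_inf_eq_of_inf_eq_bot (le_trans hY2 hEC) hinf)
        · rintro X₁ - X₂ - hX
          have hX' : OrderDual.ofDual X₂ ≤ OrderDual.ofDual X₁ := hX
          exact (inf_le_inf_right (C n) hX' :
            OrderDual.ofDual X₂ ⊓ C n ≤ OrderDual.ofDual X₁ ⊓ C n)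
        · rintro Y₁ - Y₂ - hY
          have hY' : OrderDual.ofDual Y₂ ≤ OrderDual.ofDual Y₁ := hY
          exact (sup_le_sup_left hY' (g n) :
            g n ⊔ OrderDual.ofDual Y₂ ≤ g n ⊔ OrderDual.ofDual Y₁)
    · -- backwards: from dual to straight
      intro H
      rw [DevLE]
      intro f hf hmono
      obtain ⟨C, hC⟩ := exists_compl_chain_desc D ⟨D', hD'⟩ f (fun n => (hf n).1)
        (fun n => hmono n) (fun n => (hf n).2)
      rw [DevLE] at H
      obtain ⟨N, hN⟩ := H (fun n => OrderDual.toDual (C n))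
        (fun n => ⟨(hC n).1, (hC n).2.2.2 ▸ le_sup_right⟩)
        (fun n => ((hC n).2.1 : C n ≤ C (n + 1)))
      refine ⟨N, fun n hn => ?_⟩
      have hCs : IsSummand (C n) := (hC n).1
      have hCs1 : IsSummand (C (n + 1)) := (hC (n + 1)).1
      have hCle : C n ≤ C (n + 1) := (hC n).2.1
      have hinf : f n ⊓ C n = ⊥ := (hC n).2.2.1
      have hsup : f n ⊔ C n = D := (hC n).2.2.2
      have hinf1 : f (n + 1) ⊓ C (n + 1) = ⊥ := (hC (n + 1)).2.2.1
      have hsup1 : f (n + 1) ⊔ C (n + 1) = D := (hC (n + 1)).2.2.2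
      have hfD : f n ≤ D := (hf n).2
      have hfD1 : f (n + 1) ≤ D := (hf (n + 1)).2
      have hCD : C n ≤ D := hsup ▸ le_sup_right
      have hCD1 : C (n + 1) ≤ D := hsup1 ▸ le_sup_right
      have hfmle : f (n + 1) ≤ f n := hmono n
      set E := f n ⊓ C (n + 1) with hEdef
      have hEf : E ≤ f n := inf_le_left
      have hEC : E ≤ C (n + 1) := inf_le_right
      have f1 : f (n + 1) ⊔ E = f n := sup_inf_self_of_le hfmle hsup1 hfD
      have f2 : C n ⊔ E = C (n + 1) := by
        rw [hEdef, inf_comm (f n) (C (n + 1))]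
        exact sup_inf_self_of_le hCle (by rw [sup_comm]; exact hsup) hCD1
      have f3 : C n ⊓ f n = ⊥ := by rw [inf_comm]; exact hinf
      have f4 : f (n + 1) ⊓ E = ⊥ := le_antisymm (le_trans
        (inf_le_inf_left _ hEC) (le_of_eq hinf1)) bot_le
      have compl1 : IsCompl (f (n + 1)) (C (n + 1) ⊔ D') := lemC hinf1 hsup1 hD'
      have compl2 : IsCompl (C n) (f n ⊔ D') :=
        lemC f3 (by rw [sup_comm]; exact hsup) hD'
      have hE : IsSummand E := by
        have e : f n ⊓ (C (n + 1) ⊔ D') = f n ⊓ C (n + 1) :=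
          inf_sup_compl_eq hCD1 hfD hD'
        rw [hEdef, ← e]
        exact summand_inf compl1 hfmle (hf n).1
      rcases hN n hn with disc | ⟨o', ho', hdev⟩
      · left
        rintro a ⟨⟨has, haD⟩, ha1, ha2⟩ b ⟨⟨hbs, hbD⟩, hb1, hb2⟩ hab
        have memPhi : ∀ X : Submodule R M, IsSummand X → X ≤ D → f (n + 1) ≤ X → X ≤ f n →
            OrderDual.toDual (C n ⊔ X ⊓ C (n + 1)) ∈
              TD D ∩ Set.Icc (OrderDual.toDual (C (n + 1))) (OrderDual.toDual (C n)) := by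
          intro X hXs hXD hX1 hX2
          have e : X ⊓ (C (n + 1) ⊔ D') = X ⊓ C (n + 1) := inf_sup_compl_eq hCD1 hXD hD'
          have s1 : IsSummand (X ⊓ C (n + 1)) := e ▸ summand_inf compl1 hX1 hXs
          refine ⟨⟨summand_sup compl2 ?_ s1, sup_le hCD (le_trans inf_le_right hCD1)⟩,
            ?_, ?_⟩
          · exact le_trans (le_trans inf_le_left hX2) le_sup_left
          · exact (sup_le hCle inf_le_right : C n ⊔ X ⊓ C (n + 1) ≤ C (n + 1))
          · exact (le_sup_left : C n ≤ C n ⊔ X ⊓ C (n + 1))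
        have memA := memPhi a has haD ha1 ha2
        have memB := memPhi b hbs hbD hb1 hb2
        have hle' : C n ⊔ a ⊓ C (n + 1) ≤ C n ⊔ b ⊓ C (n + 1) :=
          sup_le_sup_left (inf_le_inf_right _ hab) _
        have heq := disc _ memB _ memA hle'
        have hfin : C n ⊔ b ⊓ C (n + 1) = C n ⊔ a ⊓ C (n + 1) :=
          congrArg OrderDual.ofDual heq
        have rA : (C n ⊔ a ⊓ C (n + 1)) ⊓ f n = a ⊓ C (n + 1) :=
          sup_inf_eq_of_inf_eq_bot (le_trans inf_le_left ha2) f3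
        have rB : (C n ⊔ b ⊓ C (n + 1)) ⊓ f n = b ⊓ C (n + 1) :=
          sup_inf_eq_of_inf_eq_bot (le_trans inf_le_left hb2) f3
        have hABC : a ⊓ C (n + 1) = b ⊓ C (n + 1) := by rw [← rA, ← rB, hfin]
        rw [← sup_inf_self_of_le ha1 hsup1 haD, ← sup_inf_self_of_le hb1 hsup1 hbD, hABC]
      · right
        refine ⟨o', ho', ?_⟩
        have step1 : DevLE (TD E) o' := by
          refine devLE_congr o' (TD E)
            (TD D ∩ Set.Icc (OrderDual.toDual (C (n + 1))) (OrderDual.toDual (C n)))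
            (fun Y => OrderDual.toDual (C n ⊔ OrderDual.ofDual Y))
            (fun X => OrderDual.toDual (OrderDual.ofDual X ⊓ f n)) ?_ ?_ ?_ ?_ ?_ ?_ hdev
          · rintro Y ⟨hY1, hY2⟩
            refine ⟨⟨summand_sup compl2 (le_trans hY2 (le_trans hEf le_sup_left)) hY1,
              sup_le hCD (le_trans hY2 (le_trans hEC hCD1))⟩, ?_, ?_⟩
            · exact (sup_le hCle (le_trans hY2 hEC) :
                C n ⊔ OrderDual.ofDual Y ≤ C (n + 1))
            · exact (le_sup_left : C n ≤ C n ⊔ OrderDual.ofDual Y)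
          · rintro X ⟨⟨hXs, hXD⟩, hX1, hX2⟩
            have hX1' : OrderDual.ofDual X ≤ C (n + 1) := hX1
            have hX2' : C n ≤ OrderDual.ofDual X := hX2
            have e : OrderDual.ofDual X ⊓ (f n ⊔ D') = OrderDual.ofDual X ⊓ f n :=
              inf_sup_compl_eq hfD hXD hD'
            refine ⟨show IsSummand (OrderDual.ofDual X ⊓ f n) from
              e ▸ summand_inf compl2 hX2' hXs, ?_⟩
            rw [hEdef]
            exact le_inf inf_le_right (le_trans inf_le_left hX1')
          · rintro Y ⟨hY1, hY2⟩
            exact congrArg OrderDual.toDual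
              (sup_inf_eq_of_inf_eq_bot (le_trans hY2 hEf) f3)
          · rintro X ⟨⟨hXs, hXD⟩, hX1, hX2⟩
            have hX2' : C n ≤ OrderDual.ofDual X := hX2
            exact congrArg OrderDual.toDual
              (sup_inf_self_of_le hX2' (by rw [sup_comm]; exact hsup) hXD)
          · rintro Y₁ - Y₂ - hY
            have hY' : OrderDual.ofDual Y₂ ≤ OrderDual.ofDual Y₁ := hY
            exact (sup_le_sup_left hY' (C n) :
              C n ⊔ OrderDual.ofDual Y₂ ≤ C n ⊔ OrderDual.ofDual Y₁)
          · rintro X₁ - X₂ - hX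
            have hX' : OrderDual.ofDual X₂ ≤ OrderDual.ofDual X₁ := hX
            exact (inf_le_inf_right (f n) hX' :
              OrderDual.ofDual X₂ ⊓ f n ≤ OrderDual.ofDual X₁ ⊓ f n)
        have step2 : DevLE (SD E) o' := (IH o' ho' E hE).mpr step1
        refine devLE_congr o' (SD D ∩ Set.Icc (f (n + 1)) (f n)) (SD E)
          (fun X => X ⊓ C (n + 1)) (fun Y => f (n + 1) ⊔ Y) ?_ ?_ ?_ ?_ ?_ ?_ step2
        · rintro X ⟨⟨hXs, hXD⟩, hX1, hX2⟩
          have e : X ⊓ (C (n + 1) ⊔ D') = X ⊓ C (n + 1) := inf_sup_compl_eq hCD1 hXD hD'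
          refine ⟨show IsSummand (X ⊓ C (n + 1)) from e ▸ summand_inf compl1 hX1 hXs, ?_⟩
          rw [hEdef]
          exact le_inf (le_trans inf_le_left hX2) inf_le_right
        · rintro Y ⟨hY1, hY2⟩
          refine ⟨⟨summand_sup compl1 (le_trans hY2 (le_trans hEC le_sup_left)) hY1,
            sup_le hfD1 (le_trans hY2 (le_trans hEf hfD))⟩,
            le_sup_left, sup_le hfmle (le_trans hY2 hEf)⟩
        · rintro X ⟨⟨hXs, hXD⟩, hX1, hX2⟩
          exact sup_inf_self_of_le hX1 hsup1 hXD
        · rintro Y ⟨hY1, hY2⟩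
          exact sup_inf_eq_of_inf_eq_bot (le_trans hY2 hEC) hinf1
        · rintro X₁ - X₂ - hX
          exact inf_le_inf_right _ hX
        · rintro Y₁ - Y₂ - hY
          exact sup_le_sup_left hY _



attribute [local instance] Classical.propDecidable

theorem univ_iff_SD (o : Ordinal.{v}) :
    DevLE (Set.univ : Set {N : Submodule R M // IsSummand N}) o ↔
    DevLE (SD (⊤ : Submodule R M)) o := by
  constructor
  · intro h
    refine devLE_congr o (SD (⊤ : Submodule R M))
      (Set.univ : Set {N : Submodule R M // IsSummand N})
      (fun X => if hX : IsSummand X then ⟨X, hX⟩ else ⟨⊥, bot_summand⟩)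
      (fun Y => Y.1) ?_ ?_ ?_ ?_ ?_ ?_ h
    · intro a _; trivial
    · intro b _; exact ⟨b.2, le_top⟩
    · rintro a ⟨ha, -⟩; rw [dif_pos ha]
    · intro b _; rw [dif_pos b.2]
    · rintro a ⟨ha, -⟩ b ⟨hb, -⟩ hab; rw [dif_pos ha, dif_pos hb]; exact hab
    · intro a _ b _ hab; exact hab
  · intro h
    refine devLE_congr o (Set.univ : Set {N : Submodule R M // IsSummand N})
      (SD (⊤ : Submodule R M)) (fun Y => Y.1)
      (fun X => if hX : IsSummand X then ⟨X, hX⟩ else ⟨⊥, bot_summand⟩) ?_ ?_ ?_ ?_ ?_ ?_ h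
    · intro b _; exact ⟨b.2, le_top⟩
    · intro a _; trivial
    · intro b _; rw [dif_pos b.2]
    · rintro a ⟨ha, -⟩; rw [dif_pos ha]
    · intro a _ b _ hab; exact hab
    · rintro a ⟨ha, -⟩ b ⟨hb, -⟩ hab; rw [dif_pos ha, dif_pos hb]; exact hab

theorem univ_iff_TD (o : Ordinal.{v}) :
    DevLE (Set.univ : Set ({N : Submodule R M // IsSummand N}ᵒᵈ)) o ↔
    DevLE (TD (⊤ : Submodule R M)) o := by
  constructor
  · intro h
    refine devLE_congr o (TD (⊤ : Submodule R M))
      (Set.univ : Set ({N : Submodule R M // IsSummand N}ᵒᵈ))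
      (fun X => OrderDual.toDual (if hX : IsSummand (OrderDual.ofDual X) then
        (⟨OrderDual.ofDual X, hX⟩ : {N : Submodule R M // IsSummand N}) else ⟨⊥, bot_summand⟩))
      (fun Y => OrderDual.toDual (OrderDual.ofDual Y).1) ?_ ?_ ?_ ?_ ?_ ?_ h
    · intro a _; trivial
    · intro b _; exact ⟨(OrderDual.ofDual b).2, le_top⟩
    · rintro a ⟨ha, -⟩; rw [dif_pos ha]; rfl
    · intro b _
      exact dif_pos (OrderDual.ofDual b).2
    · rintro a ⟨ha, -⟩ b ⟨hb, -⟩ hab; rw [dif_pos ha, dif_pos hb]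
      exact hab
    · intro a _ b _ hab; exact hab
  · intro h
    refine devLE_congr o (Set.univ : Set ({N : Submodule R M // IsSummand N}ᵒᵈ))
      (TD (⊤ : Submodule R M))
      (fun Y => OrderDual.toDual (OrderDual.ofDual Y).1)
      (fun X => OrderDual.toDual (if hX : IsSummand (OrderDual.ofDual X) then
        (⟨OrderDual.ofDual X, hX⟩ : {N : Submodule R M // IsSummand N}) else ⟨⊥, bot_summand⟩))
      ?_ ?_ ?_ ?_ ?_ ?_ h
    · intro b _; exact ⟨(OrderDual.ofDual b).2, le_top⟩
    · intro a _; trivial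
    · intro b _
      exact dif_pos (OrderDual.ofDual b).2
    · rintro a ⟨ha, -⟩; rw [dif_pos ha]; rfl
    · intro a _ b _ hab; exact hab
    · rintro a ⟨ha, -⟩ b ⟨hb, -⟩ hab; rw [dif_pos ha, dif_pos hb]
      exact hab

end Summand

/-- If the poset `S(M)` of direct summands of `M` has deviation, then its dual poset also
has deviation and the two deviations are equal (the bounds `DevLE` coincide at every
ordinal, hence the least such ordinals agree). -/
theorem dev_dual_eq_dev {R : Type*} [Ring R] {M : Type*} [AddCommGroup M] [Module R M]
    (hdev : ∃ o : Ordinal.{v},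
      DevLE (Set.univ : Set {N : Submodule R M // IsSummand N}) o) :
    (∃ o : Ordinal.{v},
      DevLE (Set.univ : Set ({N : Submodule R M // IsSummand N}ᵒᵈ)) o) ∧
    ∀ o : Ordinal.{v},
      DevLE (Set.univ : Set {N : Submodule R M // IsSummand N}) o ↔
      DevLE (Set.univ : Set ({N : Submodule R M // IsSummand N}ᵒᵈ)) o := by
  have key : ∀ o : Ordinal.{v},
      DevLE (Set.univ : Set {N : Submodule R M // IsSummand N}) o ↔
      DevLE (Set.univ : Set ({N : Submodule R M // IsSummand N}ᵒᵈ)) o := fun o =>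
    (univ_iff_SD o).trans ((main_iff o ⊤ top_summand).trans (univ_iff_TD o).symm)
  exact ⟨hdev.imp fun o h => (key o).mp h, key⟩
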